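/- arXiv:1509.07946 — 2 statements merged into one kernel-verified Lean document; each statement's English description precedes it below -/
import Mathlib

section
/- For an infinite exchangeable sequence {X_l} of bounded random variables with sample averages η_N converging a.s. to η, the limit η is a.s. constant if and only if Cov(X_1, X_2) = 0. -/
open MeasureTheory ProbabilityTheory Filter

lemma exch_integral {Ω : Type*} [MeasureSpace Ω]
    (X : ℕ → Ω → ℝ) (hXmeas : ∀ l, Measurable (X l)) {n : ℕ} (σ : Equiv.Perm (Fin n))
    (h : Measure.map (fun ω => fun i : Fin n => X (σ i) ω) ℙ =
      Measure.map (fun ω => fun i : Fin n => X (i : ℕ) ω) ℙ)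
    (g : (Fin n → ℝ) → ℝ) (hg : Measurable g) :
    ∫ ω, g (fun i => X (σ i) ω) ∂ℙ = ∫ ω, g (fun i => X (i : ℕ) ω) ∂ℙ := by
  have h1 : Measurable (fun ω => fun i : Fin n => X (σ i) ω) :=
    measurable_pi_lambda _ (fun i => hXmeas _)
  have h2 : Measurable (fun ω => fun i : Fin n => X (i : ℕ) ω) :=
    measurable_pi_lambda _ (fun i => hXmeas _)
  rw [← integral_map h1.aemeasurable hg.aestronglyMeasurable, h,
    integral_map h2.aemeasurable hg.aestronglyMeasurable]

lemma perm_exists {n : ℕ} (a b : Fin (n+2)) (hab : a ≠ b) :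
    ∃ σ : Equiv.Perm (Fin (n+2)), σ 0 = a ∧ σ 1 = b := by
  set τ := Equiv.swap 0 a with hτ
  refine ⟨τ * Equiv.swap 1 (τ.symm b), ?_, ?_⟩
  · have hc0 : τ.symm b ≠ 0 := by
      intro h
      apply hab
      have : b = τ 0 := by rw [← h]; simp
      simpa [hτ] using this.symm
    have h01 : (0 : Fin (n+2)) ≠ 1 := by simp [Fin.ext_iff]
    rw [Equiv.Perm.mul_apply, Equiv.swap_apply_of_ne_of_ne h01 hc0.symm]
    simp [hτ]
  · simp [Equiv.Perm.mul_apply]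

section ids
variable {Ω : Type*} [MeasureSpace Ω]
  (X : ℕ → Ω → ℝ) (hXmeas : ∀ l, Measurable (X l))
  (hexch : ∀ (n : ℕ) (σ : Equiv.Perm (Fin n)),
      Measure.map (fun ω => fun i : Fin n => X (σ i) ω) ℙ =
        Measure.map (fun ω => fun i : Fin n => X (i : ℕ) ω) ℙ)

include hXmeas hexch

lemma int_eq (i : ℕ) : ∫ ω, X i ω ∂ℙ = ∫ ω, X 0 ω ∂ℙ := by
  have hlt : i < i + 1 := Nat.lt_succ_self i
  have := exch_integral X hXmeas (Equiv.swap 0 ⟨i, hlt⟩)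
    (hexch (i+1) _) (fun v => v 0) (measurable_pi_apply 0)
  simpa using this

lemma intsq_eq (i : ℕ) : ∫ ω, X i ω * X i ω ∂ℙ = ∫ ω, X 0 ω * X 0 ω ∂ℙ := by
  have hlt : i < i + 1 := Nat.lt_succ_self i
  have := exch_integral X hXmeas (Equiv.swap 0 ⟨i, hlt⟩)
    (hexch (i+1) _) (fun v => v 0 * v 0)
    ((measurable_pi_apply 0).mul (measurable_pi_apply 0))
  simpa using this

lemma intmul_eq {i j : ℕ} (hij : i ≠ j) :
    ∫ ω, X i ω * X j ω ∂ℙ = ∫ ω, X 0 ω * X 1 ω ∂ℙ := by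
  set n := max i j with hn
  have hi : i < n + 2 := by omega
  have hj : j < n + 2 := by omega
  obtain ⟨σ, hσ0, hσ1⟩ := perm_exists (⟨i, hi⟩ : Fin (n+2)) ⟨j, hj⟩
    (by simp [Fin.ext_iff, hij])
  have := exch_integral X hXmeas σ (hexch (n+2) σ) (fun v => v 0 * v 1)
    ((measurable_pi_apply 0).mul (measurable_pi_apply 1))
  simpa [hσ0, hσ1] using this

end ids

/-- For an infinite exchangeable sequence of bounded random variables whose sample averages
converge a.s. to `η`, the limit `η` is a.s. constant iff `Cov(X_1, X_2) = 0`. -/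
theorem stmt5
    {Ω : Type*} [MeasureSpace Ω] [IsProbabilityMeasure (ℙ : Measure Ω)]
    (gmin gmax : ℝ) (hgmin : 0 < gmin) (hg : gmin ≤ gmax)
    (X : ℕ → Ω → ℝ) (η : Ω → ℝ)
    (hXmeas : ∀ l, Measurable (X l)) (hηmeas : Measurable η)
    (hXbdd : ∀ l, ∀ᵐ ω ∂ℙ, gmin ≤ X l ω ∧ X l ω ≤ gmax)
    (hexch : ∀ (n : ℕ) (σ : Equiv.Perm (Fin n)),
        Measure.map (fun ω => fun i : Fin n => X (σ i) ω) ℙ =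
          Measure.map (fun ω => fun i : Fin n => X (i : ℕ) ω) ℙ)
    (hconv : ∀ᵐ ω ∂ℙ, Tendsto (fun N : ℕ => (∑ l ∈ Finset.range N, X l ω) / (N : ℝ))
        atTop (nhds (η ω))) :
    (∃ c : ℝ, ∀ᵐ ω ∂ℙ, η ω = c) ↔
      (∫ ω, X 0 ω * X 1 ω ∂ℙ) - (∫ ω, X 0 ω ∂ℙ) * (∫ ω, X 1 ω ∂ℙ) = 0 := by
  have hgmax : (0:ℝ) < gmax := lt_of_lt_of_le hgmin hg
  set m := ∫ ω, X 0 ω ∂ℙ with hm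
  set s := ∫ ω, X 0 ω * X 0 ω ∂ℙ with hs
  set q := ∫ ω, X 0 ω * X 1 ω ∂ℙ with hq
  have hX1 : ∫ ω, X 1 ω ∂ℙ = m := int_eq X hXmeas hexch 1
  rw [hX1]
  -- integrability helper
  have hint : ∀ (f : Ω → ℝ) (C : ℝ), Measurable f → (∀ᵐ ω ∂ℙ, |f ω| ≤ C) →
      Integrable f ℙ := fun f C hf hb =>
    (integrable_const C).mono' hf.aestronglyMeasurable
      (by simpa [Real.norm_eq_abs] using hb)
  have hXint : ∀ l, Integrable (X l) ℙ := fun l =>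
    hint _ gmax (hXmeas l) ((hXbdd l).mono fun ω h => abs_le.2 ⟨by linarith, h.2⟩)
  have hXXint : ∀ i j, Integrable (fun ω => X i ω * X j ω) ℙ := fun i j =>
    hint _ (gmax * gmax) ((hXmeas i).mul (hXmeas j))
      (((hXbdd i).and (hXbdd j)).mono fun ω ⟨hi, hj⟩ => by
        rw [abs_mul]
        exact mul_le_mul (abs_le.2 ⟨by linarith, hi.2⟩) (abs_le.2 ⟨by linarith, hj.2⟩)
          (abs_nonneg _) hgmax.le)
  have hae : ∀ᵐ ω ∂ℙ, ∀ l, gmin ≤ X l ω ∧ X l ω ≤ gmax := ae_all_iff.2 hXbdd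
  set F : ℕ → Ω → ℝ := fun N ω => (∑ l ∈ Finset.range N, X l ω) / (N : ℝ) with hF
  -- pointwise bounds on averages
  have habs : ∀ ω, (∀ l, gmin ≤ X l ω ∧ X l ω ≤ gmax) → ∀ N : ℕ, |F N ω| ≤ gmax := by
    intro ω hω N
    rcases Nat.eq_zero_or_pos N with h | h
    · simp [hF, h]; linarith
    · have hNpos : (0:ℝ) < N := by exact_mod_cast h
      have hs0 : (0:ℝ) ≤ ∑ l ∈ Finset.range N, X l ω :=
        Finset.sum_nonneg fun l _ => le_trans hgmin.le (hω l).1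
      have hs1 : (∑ l ∈ Finset.range N, X l ω) ≤ N * gmax := by
        calc (∑ l ∈ Finset.range N, X l ω) ≤ ∑ l ∈ Finset.range N, gmax :=
              Finset.sum_le_sum fun l _ => (hω l).2
          _ = N * gmax := by simp [mul_comm]
      rw [hF]
      rw [abs_of_nonneg (div_nonneg hs0 hNpos.le), div_le_iff₀ hNpos]
      linarith
  have hlow : ∀ ω, (∀ l, gmin ≤ X l ω ∧ X l ω ≤ gmax) → ∀ N : ℕ, 1 ≤ N →
      gmin ≤ F N ω := by
    intro ω hω N hN
    have hNpos : (0:ℝ) < N := by exact_mod_cast hN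
    have hs1 : (N : ℝ) * gmin ≤ ∑ l ∈ Finset.range N, X l ω := by
      calc (N:ℝ) * gmin = ∑ l ∈ Finset.range N, gmin := by simp [mul_comm]
        _ ≤ _ := Finset.sum_le_sum fun l _ => (hω l).1
    rw [hF, le_div_iff₀ hNpos]
    linarith
  -- a.e. bounds on η
  have hηbdd : ∀ᵐ ω ∂ℙ, gmin ≤ η ω ∧ η ω ≤ gmax := by
    filter_upwards [hae, hconv] with ω hω hc
    constructor
    · exact ge_of_tendsto hc (eventually_atTop.2 ⟨1, fun N hN => hlow ω hω N hN⟩)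
    · exact le_of_tendsto hc (Eventually.of_forall fun N =>
        le_trans (le_abs_self _) (habs ω hω N))
  have hηabs : ∀ᵐ ω ∂ℙ, |η ω| ≤ gmax :=
    hηbdd.mono fun ω h => abs_le.2 ⟨by linarith [h.1], h.2⟩
  have hηint : Integrable η ℙ := hint _ gmax hηmeas hηabs
  -- integral of F N
  have hIF : ∀ N : ℕ, 1 ≤ N → ∫ ω, F N ω ∂ℙ = m := by
    intro N hN
    have hNne : (N : ℝ) ≠ 0 := Nat.cast_ne_zero.2 (by omega)
    rw [hF]
    simp only [integral_div]
    rw [integral_finset_sum _ fun l _ => hXint l]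
    have : ∀ l ∈ Finset.range N, ∫ ω, X l ω ∂ℙ = m := fun l _ =>
      int_eq X hXmeas hexch l
    rw [Finset.sum_congr rfl this, Finset.sum_const, Finset.card_range]
    field_simp
    exact nsmul_eq_mul _ _
  -- integral of F N * F N
  have hIFF : ∀ N : ℕ, 1 ≤ N → ∫ ω, F N ω * F N ω ∂ℙ = q + (s - q) / N := by
    intro N hN
    have hNne : (N : ℝ) ≠ 0 := Nat.cast_ne_zero.2 (by omega)
    have hexp : ∀ ω, F N ω * F N ω =
        (∑ i ∈ Finset.range N, ∑ j ∈ Finset.range N, X i ω * X j ω) / ((N:ℝ) * N) := by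
      intro ω
      rw [hF, div_mul_div_comm, Finset.sum_mul_sum]
    simp only [hexp, integral_div]
    rw [integral_finset_sum _ fun i _ => integrable_finset_sum _ fun j _ => hXXint i j]
    have hterm : ∀ i ∈ Finset.range N,
        ∫ ω, ∑ j ∈ Finset.range N, X i ω * X j ω ∂ℙ = (N:ℝ) * q + (s - q) := by
      intro i hi
      rw [integral_finset_sum _ fun j _ => hXXint i j]
      have : ∀ j ∈ Finset.range N, ∫ ω, X i ω * X j ω ∂ℙ =
          q + (if i = j then s - q else 0) := by
        intro j _
        by_cases h : i = j
        · subst h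
          rw [intsq_eq X hXmeas hexch i, if_pos rfl]
          ring
        · simp [h, intmul_eq X hXmeas hexch h, hq]
      rw [Finset.sum_congr rfl this, Finset.sum_add_distrib, Finset.sum_const,
        Finset.card_range, Finset.sum_ite_eq, if_pos hi]
      simp [mul_comm]
    rw [Finset.sum_congr rfl hterm, Finset.sum_const, Finset.card_range]
    field_simp
    ring
  have hFmeas : ∀ N, Measurable (F N) := fun N =>
    (Finset.measurable_sum _ fun l _ => hXmeas l).div measurable_const
  -- dominated convergence: ∫ η = m
  have hDCT1 : Tendsto (fun N => ∫ ω, F N ω ∂ℙ) atTop (nhds (∫ ω, η ω ∂ℙ)) := by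
    refine tendsto_integral_of_dominated_convergence (fun _ => gmax) ?_ ?_ ?_ ?_
    · intro N
      exact (hFmeas N).aestronglyMeasurable
    · exact integrable_const gmax
    · intro N
      filter_upwards [hae] with ω hω
      simpa [Real.norm_eq_abs] using habs ω hω N
    · exact hconv
  have hηm : ∫ ω, η ω ∂ℙ = m := by
    have h2 : Tendsto (fun N => ∫ ω, F N ω ∂ℙ) atTop (nhds m) := by
      refine Tendsto.congr' ?_ tendsto_const_nhds
      filter_upwards [eventually_atTop.2 ⟨1, fun N hN => hN⟩] with N hN
      exact (hIF N hN).symm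
    exact tendsto_nhds_unique hDCT1 h2
  -- dominated convergence: ∫ η² = q
  have hDCT2 : Tendsto (fun N => ∫ ω, F N ω * F N ω ∂ℙ) atTop
      (nhds (∫ ω, η ω * η ω ∂ℙ)) := by
    refine tendsto_integral_of_dominated_convergence (fun _ => gmax * gmax) ?_ ?_ ?_ ?_
    · intro N
      exact ((hFmeas N).mul (hFmeas N)).aestronglyMeasurable
    · exact integrable_const _
    · intro N
      filter_upwards [hae] with ω hω
      rw [Real.norm_eq_abs, abs_mul]
      exact mul_le_mul (habs ω hω N) (habs ω hω N) (abs_nonneg _) hgmax.le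
    · filter_upwards [hconv] with ω hc
      exact hc.mul hc
  have hηq : ∫ ω, η ω * η ω ∂ℙ = q := by
    have h2 : Tendsto (fun N => ∫ ω, F N ω * F N ω ∂ℙ) atTop (nhds q) := by
      have h3 : Tendsto (fun N : ℕ => q + (s - q) / (N:ℝ)) atTop (nhds (q + 0)) :=
        tendsto_const_nhds.add (tendsto_const_div_atTop_nhds_zero_nat (s - q))
      rw [add_zero] at h3
      refine Tendsto.congr' ?_ h3
      filter_upwards [eventually_atTop.2 ⟨1, fun N hN => hN⟩] with N hN
      exact (hIFF N hN).symm
    exact tendsto_nhds_unique hDCT2 h2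
  -- variance identity
  have hηηint : Integrable (fun ω => η ω * η ω) ℙ :=
    hint _ (gmax * gmax) (hηmeas.mul hηmeas)
      (hηabs.mono fun ω h => by
        rw [abs_mul]; exact mul_le_mul h h (abs_nonneg _) hgmax.le)
  have hvar : ∫ ω, (η ω - m) ^ 2 ∂ℙ = q - m * m := by
    have hexp : ∀ ω, (η ω - m) ^ 2 = η ω * η ω - (2 * m) * η ω + m ^ 2 := by
      intro ω; ring
    simp only [hexp]
    have e2 : Integrable (fun ω => 2 * m * η ω) ℙ := hηint.const_mul _
    have e1 : Integrable (fun ω => η ω * η ω - 2 * m * η ω) ℙ := hηηint.sub e2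
    rw [integral_add e1 (integrable_const _), integral_sub hηηint e2,
      integral_const_mul, hηm, hηq, integral_const]
    simp [measure_univ]
    ring
  constructor
  · rintro ⟨c, hc⟩
    have h1 : ∫ ω, η ω ∂ℙ = c := by
      rw [integral_congr_ae (hc.mono fun ω h => h)]
      simp [measure_univ]
    have h2 : ∫ ω, η ω * η ω ∂ℙ = c * c := by
      rw [integral_congr_ae (g := fun _ => c * c) (hc.mono fun ω h => by rw [h])]
      simp [measure_univ]
    rw [hηm] at h1
    rw [hηq] at h2
    rw [h2, h1]
    ring
  · intro h0
    refine ⟨m, ?_⟩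
    have hz : ∫ ω, (η ω - m) ^ 2 ∂ℙ = 0 := by rw [hvar, h0]
    have hnn : 0 ≤ fun ω => (η ω - m) ^ 2 := fun ω => sq_nonneg _
    have hi2 : Integrable (fun ω => (η ω - m) ^ 2) ℙ := by
      have : (fun ω => (η ω - m) ^ 2) = fun ω => η ω * η ω - (2 * m) * η ω + m ^ 2 := by
        funext ω; ring
      rw [this]
      exact (hηηint.sub (hηint.const_mul _)).add (integrable_const _)
    have := (integral_eq_zero_iff_of_nonneg hnn hi2).1 hz
    filter_upwards [this] with ω hω
    have : (η ω - m) ^ 2 = 0 := hω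
    have := pow_eq_zero_iff (n := 2) (by norm_num) |>.1 this
    linarith [sub_eq_zero.1 this]
end

section
/- Let A be an exchangeable random sequence in S^∞ and let Φ_m(A) be the random vector of r = k·i elements obtained by sampling r coordinates of A uniformly with replacement from the first m coordinates, and Φ_∞(A) = π_r(A) the first r coordinates. Then the total variation distance between the laws of Φ_m(A) and Φ_∞(A) is at most 1 − p(m), where p(m) = m(m−1)⋯(m−r+1)/m^r. Consequently sup over all such A of this distance tends to 0 as m → ∞. -/
open MeasureTheory ProbabilityTheory Filter

variable {Ω S : Type*} [MeasureSpace Ω] [MeasurableSpace S]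

/-- A random sequence is exchangeable: the law of every finite initial block is invariant
under permutations of coordinates. -/
def ExchangeableSeq (A : Ω → ℕ → S) : Prop :=
  ∀ (n : ℕ) (σ : Equiv.Perm (Fin n)),
    Measure.map (fun ω => fun i : Fin n => A ω ((σ i : Fin n) : ℕ)) (ℙ : Measure Ω) =
      Measure.map (fun ω => fun i : Fin n => A ω (i : ℕ)) (ℙ : Measure Ω)

/-- The law of `Φ_m(A)`: sample `r` coordinates of `A` uniformly with replacement from the
first `m` coordinates, independently of `A`. -/
noncomputable def sampleLaw (A : Ω → ℕ → S) (r m : ℕ) : Measure (Fin r → S) :=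
  ((m : ENNReal) ^ r)⁻¹ •
    ∑ f : Fin r → Fin m, Measure.map (fun ω => fun j : Fin r => A ω ((f j : Fin m) : ℕ))
      (ℙ : Measure Ω)

lemma perm_ext {r m : ℕ} (hrm : r ≤ m) (f : Fin r → Fin m) (hf : Function.Injective f) :
    ∃ σ : Equiv.Perm (Fin m), ∀ j : Fin r, σ (Fin.castLE hrm j) = f j := by
  classical
  let e1 : {x : Fin m // (x : ℕ) < r} ≃ Fin r :=
    { toFun := fun x => ⟨x, x.2⟩
      invFun := fun j => ⟨Fin.castLE hrm j, j.2⟩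
      left_inv := fun x => by ext; simp
      right_inv := fun j => by ext; simp }
  let e2 : Fin r ≃ {x : Fin m // x ∈ Set.range f} := Equiv.ofInjective f hf
  let e : {x : Fin m // (x : ℕ) < r} ≃ {x : Fin m // x ∈ Set.range f} := e1.trans e2
  refine ⟨e.extendSubtype, fun j => ?_⟩
  have hx : ((Fin.castLE hrm j : Fin m) : ℕ) < r := by simp
  rw [Equiv.extendSubtype_apply_of_mem e _ hx]
  simp [e, e1, e2, Equiv.ofInjective]

lemma card_inj (r m : ℕ) [DecidablePred (fun f : Fin r → Fin m => Function.Injective f)] :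
    ((Finset.univ : Finset (Fin r → Fin m)).filter (fun f => Function.Injective f)).card
      = m.descFactorial r := by
  classical
  rw [← Fintype.card_subtype,
    Fintype.card_congr (Equiv.subtypeInjectiveEquivEmbedding (Fin r) (Fin m)),
    Fintype.card_embedding_eq]
  simp

lemma map_inj_eq {A : Ω → ℕ → S} (hA : Measurable A) (hE : ExchangeableSeq A)
    {r m : ℕ} (hrm : r ≤ m) (f : Fin r → Fin m) (hf : Function.Injective f) :
    Measure.map (fun ω => fun j : Fin r => A ω ((f j : Fin m) : ℕ)) (ℙ : Measure Ω)
      = Measure.map (fun ω => fun j : Fin r => A ω (j : ℕ)) (ℙ : Measure Ω) := by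
  obtain ⟨σ, hσ⟩ := perm_ext hrm f hf
  have hAk : ∀ k : ℕ, Measurable fun ω => A ω k := fun k => (measurable_pi_apply k).comp hA
  have hπ : Measurable fun (g : Fin m → S) (j : Fin r) => g (Fin.castLE hrm j) :=
    measurable_pi_lambda _ fun j => measurable_pi_apply _
  have h1 : Measurable fun ω => fun i : Fin m => A ω ((σ i : Fin m) : ℕ) :=
    measurable_pi_lambda _ fun i => hAk _
  have h2 : Measurable fun ω => fun i : Fin m => A ω (i : ℕ) :=
    measurable_pi_lambda _ fun i => hAk _
  have key := congrArg (Measure.map fun (g : Fin m → S) (j : Fin r) => g (Fin.castLE hrm j))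
    (hE m σ)
  rw [Measure.map_map hπ h1, Measure.map_map hπ h2] at key
  have e1 : ((fun (g : Fin m → S) (j : Fin r) => g (Fin.castLE hrm j)) ∘
      fun ω => fun i : Fin m => A ω ((σ i : Fin m) : ℕ))
      = fun ω => fun j : Fin r => A ω ((f j : Fin m) : ℕ) := by
    funext ω j; simp [Function.comp, hσ j]
  have e2 : ((fun (g : Fin m → S) (j : Fin r) => g (Fin.castLE hrm j)) ∘
      fun ω => fun i : Fin m => A ω (i : ℕ))
      = fun ω => fun j : Fin r => A ω (j : ℕ) := by
    funext ω j; simp [Function.comp]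
  rw [e1, e2] at key
  exact key


/-- For an exchangeable random sequence `A`, the total variation distance between the law of
`Φ_m(A)` (sampling `r` of the first `m` coordinates uniformly with replacement) and the law
of `π_r(A)` (the first `r` coordinates) is at most `1 − p(m)` where
`p(m) = m(m−1)⋯(m−r+1)/m^r`; consequently, uniformly over all such `A`, this distance tends
to `0` as `m → ∞`. -/
theorem stmt18
    [IsProbabilityMeasure (ℙ : Measure Ω)] (r : ℕ) (hr : 0 < r) :
    (∀ (A : Ω → ℕ → S), Measurable A → ExchangeableSeq A →
      ∀ m : ℕ, r ≤ m → ∀ B : Set (Fin r → S), MeasurableSet B →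
        |(sampleLaw A r m B).toReal -
            ((Measure.map (fun ω => fun j : Fin r => A ω (j : ℕ)) (ℙ : Measure Ω)) B).toReal|
          ≤ 1 - (∏ j ∈ Finset.range r, ((m : ℝ) - (j : ℝ))) / ((m : ℝ) ^ r)) ∧
    Tendsto (fun m : ℕ => 1 - (∏ j ∈ Finset.range r, ((m : ℝ) - (j : ℝ))) / ((m : ℝ) ^ r))
      atTop (nhds 0) := by
  classical
  constructor
  · intro A hA hE m hrm B hB
    have hAk : ∀ k : ℕ, Measurable fun ω => A ω k := fun k => (measurable_pi_apply k).comp hA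
    have hm0 : 0 < m := lt_of_lt_of_le hr hrm
    set μf : (Fin r → Fin m) → Measure (Fin r → S) :=
      fun f => Measure.map (fun ω => fun j : Fin r => A ω ((f j : Fin m) : ℕ)) ℙ with hμf
    set x : (Fin r → Fin m) → ℝ := fun f => (μf f B).toReal with hx
    set y : ℝ := ((Measure.map (fun ω => fun j : Fin r => A ω (j : ℕ)) (ℙ : Measure Ω)) B).toReal
      with hy
    have hμf_prob : ∀ f, IsProbabilityMeasure (μf f) := fun f =>
      Measure.isProbabilityMeasure_map (measurable_pi_lambda _ fun j => hAk _).aemeasurable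
    have hy_prob : IsProbabilityMeasure
        (Measure.map (fun ω => fun j : Fin r => A ω (j : ℕ)) (ℙ : Measure Ω)) :=
      Measure.isProbabilityMeasure_map (measurable_pi_lambda _ fun j => hAk _).aemeasurable
    set M : ℝ := (m : ℝ) ^ r with hM
    have hMpos : 0 < M := by positivity
    -- toReal of sampleLaw
    have hS : (sampleLaw A r m B).toReal = (∑ f, x f) / M := by
      rw [sampleLaw, Measure.smul_apply, Measure.finset_sum_apply, smul_eq_mul,
        ENNReal.toReal_mul, ENNReal.toReal_sum (fun f _ => measure_ne_top _ _)]
      rw [div_eq_inv_mul]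
      congr 1
      rw [ENNReal.toReal_inv]
      norm_num [hM]
    -- injective terms equal y
    have hxy : ∀ f : Fin r → Fin m, Function.Injective f → x f = y := by
      intro f hf
      simp only [hx, hy, hμf, map_inj_eq hA hE hrm f hf]
    have hbound : ∀ f : Fin r → Fin m, |x f - y| ≤ 1 := by
      intro f
      have h1 : x f ≤ 1 := by
        have := prob_le_one (μ := μf f) (s := B)
        simpa [hx] using ENNReal.toReal_mono ENNReal.one_ne_top this
      have h2 : y ≤ 1 := by
        have := prob_le_one
          (μ := Measure.map (fun ω => fun j : Fin r => A ω (j : ℕ)) (ℙ : Measure Ω)) (s := B)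
        simpa [hy] using ENNReal.toReal_mono ENNReal.one_ne_top this
      have h3 : 0 ≤ x f := ENNReal.toReal_nonneg
      have h4 : 0 ≤ y := ENNReal.toReal_nonneg
      rw [abs_sub_le_iff]; constructor <;> linarith
    have hcard_univ : (Finset.univ : Finset (Fin r → Fin m)).card = m ^ r := by
      simp [Finset.card_univ]
    set D : ℕ := m.descFactorial r with hD
    have hDle : D ≤ m ^ r := Nat.descFactorial_le_pow m r
    have hcast : (D : ℝ) = ∏ j ∈ Finset.range r, ((m : ℝ) - (j : ℝ)) := by
      rw [hD, Nat.descFactorial_eq_prod_range, Nat.cast_prod]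
      exact Finset.prod_congr rfl fun j hj => by
        rw [Nat.cast_sub (le_of_lt (lt_of_lt_of_le (Finset.mem_range.mp hj) hrm))]
    -- sum of deviations
    have hsum : |∑ f : Fin r → Fin m, (x f - y)| ≤ ((m ^ r - D : ℕ) : ℝ) := by
      have hsplit :
          ∑ f : Fin r → Fin m, (x f - y)
            = ∑ f ∈ Finset.univ.filter (fun f : Fin r → Fin m => ¬ Function.Injective f), (x f - y) := by
        rw [← Finset.sum_filter_add_sum_filter_not Finset.univ Function.Injective
          (fun f => x f - y)]
        rw [Finset.sum_eq_zero (fun f hf => by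
          rw [hxy f (Finset.mem_filter.mp hf).2, sub_self]), zero_add]
      rw [hsplit]
      calc |∑ f ∈ Finset.univ.filter (fun f : Fin r → Fin m => ¬ Function.Injective f), (x f - y)|
          ≤ ∑ f ∈ Finset.univ.filter (fun f : Fin r → Fin m => ¬ Function.Injective f), |x f - y| :=
            Finset.abs_sum_le_sum_abs _ _
        _ ≤ ∑ f ∈ Finset.univ.filter (fun f : Fin r → Fin m => ¬ Function.Injective f), 1 :=
            Finset.sum_le_sum fun f _ => hbound f
        _ = ((Finset.univ.filter (fun f : Fin r → Fin m => ¬ Function.Injective f)).card : ℝ) := by simp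
        _ = ((m ^ r - D : ℕ) : ℝ) := by
            congr 1
            have h := Finset.card_filter_add_card_filter_not
              (s := (Finset.univ : Finset (Fin r → Fin m)))
              (fun f => Function.Injective f)
            rw [card_inj r m] at h
            omega
    -- main computation
    have hsum_y : ∑ _f : Fin r → Fin m, y = M * y := by
      rw [Finset.sum_const, hcard_univ, nsmul_eq_mul, hM]
      push_cast; ring
    have hkey : (sampleLaw A r m B).toReal - y = (∑ f : Fin r → Fin m, (x f - y)) / M := by
      rw [hS, Finset.sum_sub_distrib, hsum_y]
      field_simp
    rw [hkey, abs_div, abs_of_pos hMpos]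
    rw [← hcast]
    have hcast2 : ((m ^ r - D : ℕ) : ℝ) = M - D := by
      rw [Nat.cast_sub hDle, hM]; push_cast; ring
    calc |∑ f : Fin r → Fin m, (x f - y)| / M ≤ ((m ^ r - D : ℕ) : ℝ) / M := by
          gcongr
      _ = 1 - (D : ℝ) / M := by rw [hcast2]; field_simp
  · -- tendsto part
    have h1 : Tendsto (fun m : ℕ => ∏ j ∈ Finset.range r, (1 - (j : ℝ) / m)) atTop
        (nhds (∏ j ∈ Finset.range r, 1)) := by
      refine tendsto_finset_prod _ fun j _ => ?_
      simpa using tendsto_const_nhds.sub (tendsto_const_div_atTop_nhds_zero_nat (j : ℝ))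
    rw [Finset.prod_const_one] at h1
    have h2 : Tendsto (fun m : ℕ => 1 - ∏ j ∈ Finset.range r, (1 - (j : ℝ) / m)) atTop
        (nhds 0) := by
      simpa using (tendsto_const_nhds (x := (1:ℝ)) (f := atTop (α := ℕ))).sub h1
    refine h2.congr' ?_
    filter_upwards [eventually_ge_atTop 1] with m hm
    have hm0 : (m : ℝ) ≠ 0 := by positivity
    congr 1
    have hfac : ∀ j ∈ Finset.range r, (1 - (j : ℝ) / m) = ((m : ℝ) - j) / m := fun j _ => by
      field_simp
    rw [Finset.prod_congr rfl hfac, Finset.prod_div_distrib, Finset.prod_const,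
      Finset.card_range]
end
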